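/- Let κ ≥ 0 and p, w ∈ ℝ⁴ with ⟨p,p⟩ = 0, ⟨p,w⟩ = 0 and ⟨w,w⟩ = −κ². On the open set Ω' = {e ∈ ℝ⁴ : ⟨e,e⟩ < 0 and ⟨e,p⟩ ≠ 0} define u₀(e) := exp( −i·(κ·√(−⟨e,e⟩) + ⟨e,w⟩)/⟨e,p⟩ ). Then for all e ∈ Ω': (i) D_e u₀(e) = 0 (homogeneity of degree 0 in e); (ii) √(−⟨e,e⟩) · D_p u₀(e) = i·κ · u₀(e); and (iii) √(−⟨e,e⟩) · ⟨e,p⟩ · □u₀(e) = i·κ · u₀(e), where □ := ∂²/∂(e⁰)² − ∂²/∂(e¹)² − ∂²/∂(e²)² − ∂²/∂(e³)². (The equations of motion (e∂_e)φ^{κ(0)} = 0, √(−e²)(∂_x∂_e)φ^{κ(0)} = −κφ^{κ(0)} and √(−e²)(e∂_x)□_e φ^{κ(0)} = −κφ^{κ(0)} of Proposition 2.2, expressed at the level of the standard intertwiner u^{κ(0)} including the Köhler factor.) -/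

import Mathlib

noncomputable section

/-- Minkowski bilinear form on ℝ⁴. -/
def mink (a b : Fin 4 → ℝ) : ℝ := a 0 * b 0 - a 1 * b 1 - a 2 * b 2 - a 3 * b 3

/-- Directional derivative `D_v f(e) = (d/dt) f(e+tv)|_{t=0}`. -/
def Dv (v : Fin 4 → ℝ) (f : (Fin 4 → ℝ) → ℂ) (e : Fin 4 → ℝ) : ℂ :=
  deriv (fun t : ℝ => f (e + t • v)) 0

/-- Standard basis vector of ℝ⁴. -/
def bvec (μ : Fin 4) : Fin 4 → ℝ := fun i => if i = μ then 1 else 0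

/-- The wave operator `□ = ∂²₀ − ∂²₁ − ∂²₂ − ∂²₃` in the variable `e`. -/
def box (f : (Fin 4 → ℝ) → ℂ) (e : Fin 4 → ℝ) : ℂ :=
  Dv (bvec 0) (Dv (bvec 0) f) e - Dv (bvec 1) (Dv (bvec 1) f) e -
    Dv (bvec 2) (Dv (bvec 2) f) e - Dv (bvec 3) (Dv (bvec 3) f) e

/-- The standard intertwiner `u^{κ(0)}` including the Köhler factor. -/
def u0 (κ : ℝ) (p w : Fin 4 → ℝ) (e : Fin 4 → ℝ) : ℂ :=
  Complex.exp (-Complex.I * ((κ * Real.sqrt (-mink e e) + mink e w : ℝ) : ℂ) /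
    ((mink e p : ℝ) : ℂ))

lemma mink_comm (a b : Fin 4 → ℝ) : mink a b = mink b a := by simp [mink]; ring

lemma mink_line (e v x : Fin 4 → ℝ) (t : ℝ) :
    mink (e + t • v) x = mink e x + t * mink v x := by
  simp [mink, Pi.add_apply, Pi.smul_apply, smul_eq_mul]; ring

lemma mink_self_line (e v : Fin 4 → ℝ) (t : ℝ) :
    mink (e + t • v) (e + t • v) = mink e e + 2 * mink e v * t + mink v v * t ^ 2 := by
  simp [mink, Pi.add_apply, Pi.smul_apply, smul_eq_mul]; ring

lemma hd_mink (e v x : Fin 4 → ℝ) (t₀ : ℝ) :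
    HasDerivAt (fun t : ℝ => mink (e + t • v) x) (mink v x) t₀ := by
  have h : (fun t : ℝ => mink (e + t • v) x) = fun t => mink e x + mink v x * t := by
    funext t; rw [mink_line]; ring
  rw [h]
  simpa using ((hasDerivAt_id t₀).const_mul (mink v x)).const_add (mink e x)

lemma hd_q (e v : Fin 4 → ℝ) (t₀ : ℝ) :
    HasDerivAt (fun t : ℝ => mink (e + t • v) (e + t • v)) (2 * mink (e + t₀ • v) v) t₀ := by
  have h : (fun t : ℝ => mink (e + t • v) (e + t • v)) =
      fun t => mink e e + 2 * mink e v * t + mink v v * t ^ 2 := by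
    funext t; rw [mink_self_line]
  rw [h]
  have h1 : HasDerivAt (fun t : ℝ => mink e e + 2 * mink e v * t + mink v v * t ^ 2)
      (2 * mink e v + mink v v * (2 * t₀ ^ 1)) t₀ :=
    ((((hasDerivAt_id t₀).const_mul (2 * mink e v)).const_add (mink e e)).add
      ((hasDerivAt_pow 2 t₀).const_mul (mink v v))).congr_deriv (by ring)
  convert h1 using 1
  rw [mink_line]; ring

lemma sqrt_ne (x : Fin 4 → ℝ) (hq : mink x x < 0) : Real.sqrt (-mink x x) ≠ 0 :=
  ne_of_gt (Real.sqrt_pos.mpr (by linarith))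

lemma sq_sqrt' (x : Fin 4 → ℝ) (hq : mink x x < 0) :
    Real.sqrt (-mink x x) ^ 2 = -mink x x :=
  Real.sq_sqrt (by linarith)

lemma hd_S (e v : Fin 4 → ℝ) (t₀ : ℝ) (hq : mink (e + t₀ • v) (e + t₀ • v) < 0) :
    HasDerivAt (fun t : ℝ => Real.sqrt (-mink (e + t • v) (e + t • v)))
      (-mink (e + t₀ • v) v / Real.sqrt (-mink (e + t₀ • v) (e + t₀ • v))) t₀ := by
  have hS0 := sqrt_ne _ hq
  have h := ((hd_q e v t₀).neg).sqrt (by linarith : -mink (e + t₀ • v) (e + t₀ • v) ≠ 0)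
  convert h using 1
  · rfl
  simp only [Pi.neg_apply]
  field_simp

/-- The real phase. -/
def Ff (κ : ℝ) (p w : Fin 4 → ℝ) (x : Fin 4 → ℝ) : ℝ :=
  (κ * Real.sqrt (-mink x x) + mink x w) / mink x p

/-- Directional derivative of the phase along `v`. -/
def DF (κ : ℝ) (p w : Fin 4 → ℝ) (v x : Fin 4 → ℝ) : ℝ :=
  ((-(κ * mink x v) / Real.sqrt (-mink x x) + mink v w) * mink x p -
    (κ * Real.sqrt (-mink x x) + mink x w) * mink v p) / (mink x p) ^ 2

lemma hd_F (κ : ℝ) (p w e v : Fin 4 → ℝ) (t₀ : ℝ)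
    (hq : mink (e + t₀ • v) (e + t₀ • v) < 0) (hp : mink (e + t₀ • v) p ≠ 0) :
    HasDerivAt (fun t : ℝ => Ff κ p w (e + t • v)) (DF κ p w v (e + t₀ • v)) t₀ := by
  have hS0 := sqrt_ne _ hq
  have hnum := ((hd_S e v t₀ hq).const_mul κ).add (hd_mink e v w t₀)
  have h := hnum.div (hd_mink e v p t₀) hp
  convert h using 1
  · rfl
  · rfl
  · rfl
  rw [DF]
  simp only [Pi.add_apply, Pi.div_apply, Pi.mul_apply, Pi.sub_apply, Pi.pow_apply, Nat.cast_ofNat]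
  field_simp
  try ring

lemma u0_eq (κ : ℝ) (p w x : Fin 4 → ℝ) :
    u0 κ p w x = Complex.exp (-Complex.I * (Ff κ p w x : ℂ)) := by
  rw [u0, Ff]
  push_cast
  rw [mul_div_assoc]

lemma hd_u0 (κ : ℝ) (p w e v : Fin 4 → ℝ) (t₀ : ℝ)
    (hq : mink (e + t₀ • v) (e + t₀ • v) < 0) (hp : mink (e + t₀ • v) p ≠ 0) :
    HasDerivAt (fun t : ℝ => u0 κ p w (e + t • v))
      (u0 κ p w (e + t₀ • v) * (-Complex.I * (DF κ p w v (e + t₀ • v) : ℂ))) t₀ := by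
  have h1 := (hd_F κ p w e v t₀ hq hp).ofReal_comp
  have h2 := (h1.const_mul (-Complex.I)).cexp
  have hfun : (fun t : ℝ => u0 κ p w (e + t • v)) =
      fun t => Complex.exp (-Complex.I * (Ff κ p w (e + t • v) : ℂ)) := by
    funext t; exact u0_eq κ p w _
  rw [hfun, u0_eq]
  convert h2 using 1
  try ring

lemma Dv_u0 (κ : ℝ) (p w e v : Fin 4 → ℝ) (hq : mink e e < 0) (hp : mink e p ≠ 0) :
    Dv v (u0 κ p w) e = u0 κ p w e * (-Complex.I * (DF κ p w v e : ℂ)) := by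
  have h := hd_u0 κ p w e v 0 (by simpa using hq) (by simpa using hp)
  simp only [zero_smul, add_zero] at h
  exact h.deriv

/-- Second directional derivative of the phase along `v`. -/
def DF2 (κ : ℝ) (p w : Fin 4 → ℝ) (v x : Fin 4 → ℝ) : ℝ :=
  -(κ * (mink v v * Real.sqrt (-mink x x) ^ 2 + (mink x v) ^ 2)) /
      (Real.sqrt (-mink x x) ^ 3 * mink x p) -
    2 * DF κ p w v x * mink v p / mink x p

lemma hd_DF (κ : ℝ) (p w e v : Fin 4 → ℝ) (t₀ : ℝ)
    (hq : mink (e + t₀ • v) (e + t₀ • v) < 0) (hp : mink (e + t₀ • v) p ≠ 0) :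
    HasDerivAt (fun t : ℝ => DF κ p w v (e + t • v)) (DF2 κ p w v (e + t₀ • v)) t₀ := by
  have hS0 := sqrt_ne _ hq
  have hS := hd_S e v t₀ hq
  have hE := hd_mink e v v t₀
  have hW := hd_mink e v w t₀
  have hP := hd_mink e v p t₀
  -- numerator
  have hterm1 : HasDerivAt (fun t : ℝ => -(κ * mink (e + t • v) v))
      (-(κ * mink v v)) t₀ := ((hE.const_mul κ).neg)
  have hq1 := (hterm1.div hS hS0)
  have hnum := ((hq1.add_const (mink v w)).mul hP).sub
    (((hS.const_mul κ).add hW).mul_const (mink v p))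
  have hden := hP.pow 2
  have h := hnum.div hden (pow_ne_zero 2 hp)
  have hfun : (fun t : ℝ => DF κ p w v (e + t • v)) =
      fun t => ((-(κ * mink (e + t • v) v) / Real.sqrt (-mink (e + t • v) (e + t • v)) +
          mink v w) * mink (e + t • v) p -
        (κ * Real.sqrt (-mink (e + t • v) (e + t • v)) + mink (e + t • v) w) * mink v p) /
          (mink (e + t • v) p) ^ 2 := by
    funext t; rw [DF]
  rw [hfun]
  convert h using 1
  · rfl
  · rfl
  · rfl
  rw [DF2, DF]
  simp only [Pi.add_apply, Pi.div_apply, Pi.mul_apply, Pi.sub_apply, Pi.pow_apply, Nat.cast_ofNat]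
  field_simp
  try ring

lemma Dv_Dv_u0 (κ : ℝ) (p w e v : Fin 4 → ℝ) (hq : mink e e < 0) (hp : mink e p ≠ 0) :
    Dv v (Dv v (u0 κ p w)) e =
      u0 κ p w e * ((-Complex.I * (DF κ p w v e : ℂ)) ^ 2 +
        (-Complex.I * (DF2 κ p w v e : ℂ))) := by
  -- the conditions hold eventually along the line
  have hq0 : mink (e + (0:ℝ) • v) (e + (0:ℝ) • v) < 0 := by simpa using hq
  have hp0 : mink (e + (0:ℝ) • v) p ≠ 0 := by simpa using hp
  have h1 : ∀ᶠ t : ℝ in nhds 0, mink (e + t • v) (e + t • v) < 0 :=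
    (hd_q e v 0).continuousAt.eventually_lt continuousAt_const hq0
  have h2 : ∀ᶠ t : ℝ in nhds 0, mink (e + t • v) p ≠ 0 :=
    (hd_mink e v p 0).continuousAt.eventually_ne hp0
  have hev : (fun t : ℝ => Dv v (u0 κ p w) (e + t • v)) =ᶠ[nhds (0:ℝ)]
      (fun t : ℝ => u0 κ p w (e + t • v) * (-Complex.I * (DF κ p w v (e + t • v) : ℂ))) := by
    filter_upwards [h1, h2] with t ht1 ht2
    exact Dv_u0 κ p w (e + t • v) v ht1 ht2
  have hR : HasDerivAt
      (fun t : ℝ => u0 κ p w (e + t • v) * (-Complex.I * (DF κ p w v (e + t • v) : ℂ)))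
      (u0 κ p w (e + (0:ℝ) • v) * (-Complex.I * (DF κ p w v (e + (0:ℝ) • v) : ℂ)) *
          (-Complex.I * (DF κ p w v (e + (0:ℝ) • v) : ℂ)) +
        u0 κ p w (e + (0:ℝ) • v) * (-Complex.I * (DF2 κ p w v (e + (0:ℝ) • v) : ℂ))) 0 :=
    (hd_u0 κ p w e v 0 hq0 hp0).mul
      (((hd_DF κ p w e v 0 hq0 hp0).ofReal_comp).const_mul (-Complex.I))
  rw [Dv, hev.deriv_eq, hR.deriv]
  simp only [zero_smul, add_zero]
  ring

lemma sum_bvec_sq (x : Fin 4 → ℝ) :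
    (mink (bvec 0) x) ^ 2 - (mink (bvec 1) x) ^ 2 - (mink (bvec 2) x) ^ 2 -
      (mink (bvec 3) x) ^ 2 = mink x x := by
  simp [mink, bvec]
  try ring

lemma sum_bvec_sq' (x : Fin 4 → ℝ) :
    (mink x (bvec 0)) ^ 2 - (mink x (bvec 1)) ^ 2 - (mink x (bvec 2)) ^ 2 -
      (mink x (bvec 3)) ^ 2 = mink x x := by
  simp [mink, bvec]
  try ring

lemma sum_bvec_mul (x y : Fin 4 → ℝ) :
    mink (bvec 0) x * mink (bvec 0) y - mink (bvec 1) x * mink (bvec 1) y -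
      mink (bvec 2) x * mink (bvec 2) y - mink (bvec 3) x * mink (bvec 3) y = mink x y := by
  simp [mink, bvec]
  try ring

lemma sum_bvec_trace :
    mink (bvec 0) (bvec 0) - mink (bvec 1) (bvec 1) - mink (bvec 2) (bvec 2) -
      mink (bvec 3) (bvec 3) = 4 := by
  simp [mink, bvec]
  try norm_num

lemma mink_comb (v x y z : Fin 4 → ℝ) (a b c : ℝ) :
    mink v (a • x + b • y + c • z) = a * mink v x + b * mink v y + c * mink v z := by
  simp [mink, Pi.add_apply, Pi.smul_apply, smul_eq_mul]; ring

lemma mink_comb_left (v x y z : Fin 4 → ℝ) (a b c : ℝ) :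
    mink (a • x + b • y + c • z) v = a * mink x v + b * mink y v + c * mink z v := by
  simp [mink, Pi.add_apply, Pi.smul_apply, smul_eq_mul]; ring

lemma mink_comb2 (x y z : Fin 4 → ℝ) (a b c : ℝ) :
    mink (a • x + b • y + c • z) (a • x + b • y + c • z) =
      a ^ 2 * mink x x + b ^ 2 * mink y y + c ^ 2 * mink z z +
        2 * a * b * mink x y + 2 * a * c * mink x z + 2 * b * c * mink y z := by
  simp [mink, Pi.add_apply, Pi.smul_apply, smul_eq_mul]; ring

/-- The gradient-type vector `B` with `DF v = ⟨v, B⟩`. -/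
def Bv (κ : ℝ) (p w e : Fin 4 → ℝ) : Fin 4 → ℝ :=
  (-κ / (Real.sqrt (-mink e e) * mink e p)) • e + (1 / mink e p) • w +
    (-(κ * Real.sqrt (-mink e e) + mink e w) / (mink e p) ^ 2) • p

lemma DF_eq (κ : ℝ) (p w v e : Fin 4 → ℝ) (hq : mink e e < 0) (hp : mink e p ≠ 0) :
    DF κ p w v e = mink v (Bv κ p w e) := by
  have hS0 := sqrt_ne _ hq
  rw [DF, Bv, mink_comb, mink_comm v e]
  field_simp
  ring


/-- The equations of motion of Proposition 2.2 at the level of the standard intertwiner: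
homogeneity `(e∂_e)u₀ = 0`, `√(−e²)·D_p u₀ = iκ·u₀` and `√(−e²)·(e,p)·□u₀ = iκ·u₀`. -/
theorem standard_intertwiner_eoms (κ : ℝ) (hκ : 0 ≤ κ) (p w : Fin 4 → ℝ)
    (hpp : mink p p = 0) (hpw : mink p w = 0) (hww : mink w w = -κ ^ 2) :
    ∀ e : Fin 4 → ℝ, mink e e < 0 → mink e p ≠ 0 →
      Dv e (u0 κ p w) e = 0 ∧
      (Real.sqrt (-mink e e) : ℂ) * Dv p (u0 κ p w) e = Complex.I * (κ : ℂ) * u0 κ p w e ∧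
      (Real.sqrt (-mink e e) : ℂ) * ((mink e p : ℝ) : ℂ) * box (u0 κ p w) e =
        Complex.I * (κ : ℂ) * u0 κ p w e := by
  intro e hq hp
  have hS0 := sqrt_ne _ hq
  have hsq := sq_sqrt' _ hq
  set S := Real.sqrt (-mink e e) with hSdef
  have hee : mink e e = -S ^ 2 := by linarith
  refine ⟨?_, ?_, ?_⟩
  · -- homogeneity
    rw [Dv_u0 κ p w e e hq hp]
    have h0 : DF κ p w e e = 0 := by
      rw [DF, div_eq_zero_iff]
      left
      rw [← hSdef, hee]
      field_simp
      ring
    rw [h0]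
    simp
  · -- D_p equation
    rw [Dv_u0 κ p w e p hq hp]
    have hDFp : DF κ p w p e = -κ / S := by
      rw [DF, hpw, hpp, ← hSdef]
      field_simp
      ring
    rw [hDFp]
    have hS0c : (S : ℂ) ≠ 0 := by exact_mod_cast hS0
    push_cast
    field_simp
  · -- box equation
    have hb0 := Dv_Dv_u0 κ p w e (bvec 0) hq hp
    have hb1 := Dv_Dv_u0 κ p w e (bvec 1) hq hp
    have hb2 := Dv_Dv_u0 κ p w e (bvec 2) hq hp
    have hb3 := Dv_Dv_u0 κ p w e (bvec 3) hq hp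
    have hBform : ∀ μ : Fin 4, DF κ p w (bvec μ) e = mink (bvec μ) (Bv κ p w e) :=
      fun μ => DF_eq κ p w (bvec μ) e hq hp
    -- real identity 1 : the Minkowski square of the gradient vanishes
    have h1 : DF κ p w (bvec 0) e ^ 2 - DF κ p w (bvec 1) e ^ 2 -
        DF κ p w (bvec 2) e ^ 2 - DF κ p w (bvec 3) e ^ 2 = 0 := by
      rw [hBform 0, hBform 1, hBform 2, hBform 3, sum_bvec_sq, Bv, mink_comb2,
        ← hSdef, hww, hpp, mink_comm w p, hpw, hee]
      field_simp
      try ring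
    -- real identity 2 : the wave operator applied to the phase
    have hBp : mink (Bv κ p w e) p = -κ / S := by
      rw [Bv, mink_comb_left, hpp, mink_comm w p, hpw, ← hSdef]
      field_simp
      rw [hSdef]
      try ring
    have h2 : S * mink e p *
        (DF2 κ p w (bvec 0) e - DF2 κ p w (bvec 1) e - DF2 κ p w (bvec 2) e -
          DF2 κ p w (bvec 3) e) = -κ := by
      simp only [DF2]
      rw [hBform 0, hBform 1, hBform 2, hBform 3]
      have key : -(κ * (mink (bvec 0) (bvec 0) * S ^ 2 + mink e (bvec 0) ^ 2)) /
            (S ^ 3 * mink e p) - 2 * mink (bvec 0) (Bv κ p w e) * mink (bvec 0) p / mink e p -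
          (-(κ * (mink (bvec 1) (bvec 1) * S ^ 2 + mink e (bvec 1) ^ 2)) /
            (S ^ 3 * mink e p) - 2 * mink (bvec 1) (Bv κ p w e) * mink (bvec 1) p / mink e p) -
          (-(κ * (mink (bvec 2) (bvec 2) * S ^ 2 + mink e (bvec 2) ^ 2)) /
            (S ^ 3 * mink e p) - 2 * mink (bvec 2) (Bv κ p w e) * mink (bvec 2) p / mink e p) -
          (-(κ * (mink (bvec 3) (bvec 3) * S ^ 2 + mink e (bvec 3) ^ 2)) /
            (S ^ 3 * mink e p) - 2 * mink (bvec 3) (Bv κ p w e) * mink (bvec 3) p / mink e p) =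
          -(κ * ((mink (bvec 0) (bvec 0) - mink (bvec 1) (bvec 1) - mink (bvec 2) (bvec 2) -
              mink (bvec 3) (bvec 3)) * S ^ 2 +
            (mink e (bvec 0) ^ 2 - mink e (bvec 1) ^ 2 - mink e (bvec 2) ^ 2 -
              mink e (bvec 3) ^ 2))) / (S ^ 3 * mink e p) -
          2 * (mink (bvec 0) (Bv κ p w e) * mink (bvec 0) p -
            mink (bvec 1) (Bv κ p w e) * mink (bvec 1) p -
            mink (bvec 2) (Bv κ p w e) * mink (bvec 2) p -
            mink (bvec 3) (Bv κ p w e) * mink (bvec 3) p) / mink e p := by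
        ring
      rw [key, sum_bvec_trace, sum_bvec_sq', sum_bvec_mul, hBp, hee]
      field_simp
      ring
    -- assemble
    rw [box, hb0, hb1, hb2, hb3]
    have h1c := congrArg (fun r : ℝ => (r : ℂ)) h1
    have h2c := congrArg (fun r : ℝ => (r : ℂ)) h2
    push_cast at h1c h2c
    linear_combination (((S : ℝ) : ℂ) * ((mink e p : ℝ) : ℂ) * u0 κ p w e * Complex.I ^ 2) * h1c +
      (-Complex.I * u0 κ p w e) * h2c
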